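/- arXiv:1104.4951 — 4 statements merged into one kernel-verified Lean document; each statement's English description precedes it below -/
import Mathlib

section
/- For a manifold X (e.g. X = ℝ^n), the evaluation maps give a bijection between points of X and ℝ-algebra morphisms C^∞(X) → ℝ. Equivalently, every ℝ-algebra homomorphism φ : C^∞(X) → ℝ is evaluation at a unique point x ∈ X. -/
def smoothSubalgebra (n : ℕ) : Subalgebra ℝ ((Fin n → ℝ) → ℝ) where
  carrier := {c | ContDiff ℝ (⊤ : ℕ∞) c}
  add_mem' := fun hc hd => by
    show ContDiff ℝ (⊤ : ℕ∞) _
    exact ContDiff.add hc hd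
  mul_mem' := fun hc hd => by
    show ContDiff ℝ (⊤ : ℕ∞) _
    exact ContDiff.mul hc hd
  algebraMap_mem' := fun r => by
    show ContDiff ℝ (⊤ : ℕ∞) (fun _ => r)
    exact contDiff_const
  one_mem' := by
    show ContDiff ℝ (⊤ : ℕ∞) (fun _ => (1:ℝ))
    exact contDiff_const
  zero_mem' := by
    show ContDiff ℝ (⊤ : ℕ∞) (fun _ => (0:ℝ))
    exact contDiff_const

abbrev SmoothAlg (n : ℕ) : Type := ↥(smoothSubalgebra n)

theorem smooth_mem {n : ℕ} {g : (Fin n → ℝ) → ℝ} (h : g ∈ smoothSubalgebra n) :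
    ContDiff ℝ (⊤ : ℕ∞) g := h

def compFn {n k : ℕ} (f : (Fin k → ℝ) → ℝ) (hf : ContDiff ℝ (⊤ : ℕ∞) f)
    (c : Fin k → SmoothAlg n) : SmoothAlg n :=
  ⟨fun x => f (fun i => (c i : (Fin n → ℝ) → ℝ) x),
   hf.comp (contDiff_pi.mpr fun i => smooth_mem (c i).2)⟩

/-- For `X = ℝ^n`, evaluation gives a bijection between points of `X`
and `ℝ`-algebra morphisms `C^∞(X) → ℝ`: every `ℝ`-algebra homomorphism
`φ : C^∞(ℝ^n) → ℝ` is evaluation at a unique point `x`. -/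
theorem algHom_eq_eval (n : ℕ) (φ : SmoothAlg n →ₐ[ℝ] ℝ) :
    ∃! x : Fin n → ℝ, ∀ c : SmoothAlg n, φ c = (c : (Fin n → ℝ) → ℝ) x := by
  classical
  set π : Fin n → SmoothAlg n := fun i =>
    ⟨fun y => y i, by
      show ContDiff ℝ (⊤ : ℕ∞) (fun y : Fin n → ℝ => y i)
      exact (ContinuousLinearMap.proj (R := ℝ) (φ := fun _ : Fin n => ℝ) i).contDiff⟩ with hπ
  set x : Fin n → ℝ := fun i => φ (π i) with hx
  have key : ∀ c : SmoothAlg n, φ c = (c : (Fin n → ℝ) → ℝ) x := by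
    intro c
    by_contra hne
    set d : SmoothAlg n :=
      (c - algebraMap ℝ (SmoothAlg n) (φ c))^2
       + ∑ i, (π i - algebraMap ℝ (SmoothAlg n) (x i))^2 with hd
    have hdval : ∀ y, (d : (Fin n → ℝ) → ℝ) y
        = ((c : (Fin n → ℝ) → ℝ) y - φ c)^2 + ∑ i, (y i - x i)^2 := by
      intro y
      simp [hd, hπ, Subalgebra.coe_add, Subalgebra.coe_pow, Subalgebra.coe_sub]
    have hφd : φ d = 0 := by
      simp [hd, map_sum, map_pow, sub_self, hx]
    have hpos : ∀ y, 0 < (d : (Fin n → ℝ) → ℝ) y := by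
      intro y
      rw [hdval]
      rcases eq_or_ne y x with heq | hyx
      · have h1 : 0 < ((c : (Fin n → ℝ) → ℝ) y - φ c)^2 := by
          refine lt_of_le_of_ne (sq_nonneg _) (Ne.symm (pow_ne_zero 2 ?_))
          rw [heq]
          exact sub_ne_zero.mpr (fun h => hne h.symm)
        have h2 : 0 ≤ ∑ i, (y i - x i)^2 :=
          Finset.sum_nonneg fun i _ => sq_nonneg _
        linarith
      · have : ∃ i, y i ≠ x i := by
          by_contra h
          push_neg at h
          exact hyx (funext h)
        obtain ⟨i, hi⟩ := this
        have h2 : 0 < ∑ j, (y j - x j)^2 :=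
          Finset.sum_pos' (fun j _ => sq_nonneg _)
            ⟨i, Finset.mem_univ i,
              lt_of_le_of_ne (sq_nonneg _) (Ne.symm (pow_ne_zero 2 (sub_ne_zero.mpr hi)))⟩
        have h1 : 0 ≤ ((c : (Fin n → ℝ) → ℝ) y - φ c)^2 := sq_nonneg _
        linarith
    have hinv : ContDiff ℝ (⊤ : ℕ∞) (fun y => ((d : (Fin n → ℝ) → ℝ) y)⁻¹) :=
      (smooth_mem d.2).inv (fun y => (hpos y).ne')
    set e : SmoothAlg n := ⟨fun y => ((d : (Fin n → ℝ) → ℝ) y)⁻¹, hinv⟩ with he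
    have hde : d * e = 1 := by
      apply Subtype.ext
      funext y
      have : (d : (Fin n → ℝ) → ℝ) y * ((d : (Fin n → ℝ) → ℝ) y)⁻¹ = 1 :=
        mul_inv_cancel₀ (hpos y).ne'
      simpa [he] using this
    have : (1 : ℝ) = 0 := by
      calc (1 : ℝ) = φ (d * e) := by rw [hde, map_one]
      _ = φ d * φ e := map_mul φ d e
      _ = 0 := by rw [hφd, zero_mul]
    exact one_ne_zero this
  refine ⟨x, key, ?_⟩
  intro y hy
  funext i
  have := hy (π i)
  simp only [hπ] at this
  rw [hx]
  exact this.symm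
end

section
/- Let X, Y be manifolds. Then pullback gives a bijection from smooth maps f : X → Y to morphisms of C^∞-rings φ : C^∞(Y) → C^∞(X): every C^∞-ring morphism φ is of the form φ = f* (i.e. φ(c) = c ∘ f) for a unique smooth f. -/
structure CInftyRingStruct (C : Type) where
  op : ∀ {n : ℕ}, ((Fin n → ℝ) → ℝ) → (Fin n → C) → C
  op_comp : ∀ {n m : ℕ} (g : (Fin m → ℝ) → ℝ) (f : Fin m → (Fin n → ℝ) → ℝ),
    ContDiff ℝ (⊤ : ℕ∞) g → (∀ i, ContDiff ℝ (⊤ : ℕ∞) (f i)) →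
    ∀ c : Fin n → C,
      op (fun x => g (fun i => f i x)) c = op g (fun i => op (f i) c)
  op_proj : ∀ {n : ℕ} (j : Fin n) (c : Fin n → C),
      op (fun x => x j) c = c j

/-- A morphism of `C^∞`-rings: a map commuting with all the smooth operations. -/
def IsCMor {C D : Type} (S : CInftyRingStruct C) (T : CInftyRingStruct D)
    (φ : C → D) : Prop :=
  ∀ (n : ℕ) (f : (Fin n → ℝ) → ℝ), ContDiff ℝ (⊤ : ℕ∞) f →
    ∀ c : Fin n → C, φ (S.op f c) = T.op f (fun i => φ (c i))

/-- The commutative `ℝ`-algebra structure on `C` agrees with the one induced by the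
`C^∞`-operations applied to addition, multiplication, scalar multiplication, `1` and `0`. -/
def CInftyCompatible {C : Type} [CommRing C] [Algebra ℝ C] (S : CInftyRingStruct C) : Prop :=
  (∀ c : Fin 2 → C, S.op (fun x => x 0 + x 1) c = c 0 + c 1) ∧
  (∀ c : Fin 2 → C, S.op (fun x => x 0 * x 1) c = c 0 * c 1) ∧
  (∀ (r : ℝ) (c : Fin 1 → C), S.op (fun x => r * x 0) c = r • c 0) ∧
  (∀ c : Fin 0 → C, S.op (fun _ => (1 : ℝ)) c = 1) ∧
  (∀ c : Fin 0 → C, S.op (fun _ => (0 : ℝ)) c = 0)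


/-- The set of smooth real-valued functions on `ℝ^m`. -/
abbrev SmoothFn (m : ℕ) : Type := {c : (Fin m → ℝ) → ℝ // ContDiff ℝ (⊤ : ℕ∞) c}

/-- For `X = ℝ^m`, `Y = ℝ^k`, pullback gives a bijection from smooth maps
`f : X → Y` to morphisms of `C^∞`-rings `φ : C^∞(Y) → C^∞(X)`: pullback along any smooth
map is a `C^∞`-ring morphism, and every `C^∞`-ring morphism is `f^*` for a unique smooth `f`. -/
theorem CInfty_morphisms_are_pullbacks (m k : ℕ)
    (S : CInftyRingStruct (SmoothFn k))
    (hS : ∀ (j : ℕ) (f : (Fin j → ℝ) → ℝ) (_ : ContDiff ℝ (⊤ : ℕ∞) f)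
      (c : Fin j → SmoothFn k) (y : Fin k → ℝ), (S.op f c).1 y = f (fun i => (c i).1 y))
    (T : CInftyRingStruct (SmoothFn m))
    (hT : ∀ (j : ℕ) (f : (Fin j → ℝ) → ℝ) (_ : ContDiff ℝ (⊤ : ℕ∞) f)
      (c : Fin j → SmoothFn m) (x : Fin m → ℝ), (T.op f c).1 x = f (fun i => (c i).1 x)) :
    (∀ (f : (Fin m → ℝ) → (Fin k → ℝ)) (hf : ContDiff ℝ (⊤ : ℕ∞) f),
      IsCMor S T (fun c => ⟨fun x => c.1 (f x), c.2.comp hf⟩)) ∧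
    ∀ φ : SmoothFn k → SmoothFn m, IsCMor S T φ →
      ∃! f : (Fin m → ℝ) → (Fin k → ℝ),
        ContDiff ℝ (⊤ : ℕ∞) f ∧ ∀ c : SmoothFn k, (φ c).1 = fun x => c.1 (f x) := by

  constructor
  · intro f hf n g hg c
    apply Subtype.ext
    funext x
    simp only [hT _ _ hg, hS _ _ hg]
  · intro φ hφ
    have coordval : ∀ (j : Fin k) (y : Fin k → ℝ),
        ((⟨fun y => y j, (contDiff_pi.mp contDiff_id) j⟩ : SmoothFn k)).1 y = y j :=
      fun _ _ => rfl
    set coordS : Fin k → SmoothFn k := fun j =>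
      ⟨fun y => y j, (contDiff_pi.mp contDiff_id) j⟩ with hcoord
    set F : (Fin m → ℝ) → (Fin k → ℝ) := fun x j => (φ (coordS j)).1 x with hF
    have hFsmooth : ContDiff ℝ (⊤ : ℕ∞) F := by
      apply contDiff_pi.mpr
      intro j
      exact (φ (coordS j)).2
    have key : ∀ c : SmoothFn k, (φ c).1 = fun x => c.1 (F x) := by
      intro c
      have h1 : S.op c.1 coordS = c := by
        apply Subtype.ext
        funext y
        rw [hS _ _ c.2]
      have h2 := hφ k c.1 c.2 coordS
      rw [h1] at h2
      rw [h2]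
      funext x
      exact hT _ _ c.2 _ x
    refine ⟨F, ⟨hFsmooth, key⟩, ?_⟩
    rintro g ⟨hg, hgc⟩
    funext x j
    have := congrFun (hgc (coordS j)) x
    simpa [hF, hcoord] using this.symm
end

section
/- Every Weil algebra admits at most one C^∞-ring structure compatible with its underlying commutative ℝ-algebra structure; in particular the C^∞-operations Φ_f are determined by the Taylor expansion of f: if W is a finite-dimensional local ℝ-algebra with maximal ideal 𝔪 satisfying 𝔪^n = 0 and W/𝔪 ≅ ℝ, then for any C^∞-ring structure on W extending the algebra structure, Φ_f(c_1,...,c_k) equals the Taylor polynomial of f of order n−1 around the residues (c̄_1,...,c̄_k) ∈ ℝ^k evaluated on the nilpotent parts of c_1,...,c_k. -/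
set_option maxHeartbeats 1000000
set_option synthInstance.maxHeartbeats 400000

/-! ### Auxiliary material -/

section Aux

open MeasureTheory intervalIntegral Metric Set Filter Asymptotics

theorem contDiff_param_integral {k : ℕ} (N : ℕ) :
    ∀ (E : Type) [NormedAddCommGroup E] [NormedSpace ℝ E] [FiniteDimensional ℝ E]
      (F : ((Fin k → ℝ) × ℝ) → E), ContDiff ℝ (⊤ : ℕ∞) F →
      ContDiff ℝ (N : WithTop ℕ∞) (fun x : Fin k → ℝ => ∫ t in (0:ℝ)..1, F (x, t)) := by
  induction N with
  | zero =>
    intro E _ _ _ F hF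
    rw [Nat.cast_zero, contDiff_zero]
    refine continuous_iff_continuousAt.mpr fun x₀ => ?_
    obtain ⟨C, hC⟩ := ((isCompact_closedBall x₀ 1).prod (isCompact_uIcc (a := (0:ℝ))
      (b := 1))).exists_bound_of_continuousOn hF.continuous.continuousOn
    refine intervalIntegral.continuousAt_of_dominated_interval
      (Filter.Eventually.of_forall fun x =>
        (hF.continuous.comp (Continuous.prodMk_right x)).aestronglyMeasurable) ?_
      intervalIntegrable_const (bound := fun _ => C)
      (Filter.Eventually.of_forall fun t _ =>
        (hF.continuous.comp (continuous_id.prodMk continuous_const)).continuousAt)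
    · filter_upwards [Metric.ball_mem_nhds x₀ one_pos] with x hx
      refine Filter.Eventually.of_forall fun t ht => hC (x, t) ?_
      exact ⟨ball_subset_closedBall hx, uIoc_subset_uIcc ht⟩
  | succ N IH =>
    intro E _ _ _ F hF
    set G : ((Fin k → ℝ) × ℝ) → ((Fin k → ℝ) →L[ℝ] E) :=
      fun p => (fderiv ℝ F p).comp (ContinuousLinearMap.inl ℝ (Fin k → ℝ) ℝ) with hGdef
    have hGsm : ContDiff ℝ (⊤ : ℕ∞) G :=
      ((contDiff_infty_iff_fderiv.mp hF).2).clm_comp contDiff_const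
    have hdiff : ∀ (t : ℝ) (x : Fin k → ℝ),
        HasFDerivAt (fun x => F (x, t)) (G (x, t)) x := by
      intro t x
      have h1 : HasFDerivAt F (fderiv ℝ F (x, t)) (x, t) :=
        (hF.differentiable (by simp) (x, t)).hasFDerivAt
      have h2 : HasFDerivAt (fun x : Fin k → ℝ => (x, t))
          (ContinuousLinearMap.inl ℝ (Fin k → ℝ) ℝ) x := (hasFDerivAt_id x).prodMk
        (hasFDerivAt_const t x)
      exact h1.comp x h2
    have key : ∀ x₀, HasFDerivAt (fun x => ∫ t in (0:ℝ)..1, F (x, t))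
        (∫ t in (0:ℝ)..1, G (x₀, t)) x₀ := by
      intro x₀
      obtain ⟨C, hC⟩ := ((isCompact_closedBall x₀ 1).prod (isCompact_uIcc (a := (0:ℝ))
        (b := 1))).exists_bound_of_continuousOn hGsm.continuous.continuousOn
      refine intervalIntegral.hasFDerivAt_integral_of_dominated_of_fderiv_le
        (F := fun x t => F (x, t)) (F' := fun x t => G (x, t)) (bound := fun _ => C)
        (Metric.ball_mem_nhds x₀ one_pos)
        (Filter.Eventually.of_forall fun x =>
          (hF.continuous.comp (Continuous.prodMk_right x)).aestronglyMeasurable)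
        ((hF.continuous.comp (Continuous.prodMk_right x₀)).intervalIntegrable 0 1)
        (hGsm.continuous.comp (Continuous.prodMk_right x₀)).aestronglyMeasurable
        (Filter.Eventually.of_forall fun t ht => fun x hx => hC (x, t)
          ⟨ball_subset_closedBall hx, uIoc_subset_uIcc ht⟩)
        intervalIntegrable_const
        (Filter.Eventually.of_forall fun t ht => fun x hx => hdiff t x)
    have hdiffble : Differentiable ℝ (fun x => ∫ t in (0:ℝ)..1, F (x, t)) :=
      fun x₀ => (key x₀).differentiableAt
    have hfd : fderiv ℝ (fun x => ∫ t in (0:ℝ)..1, F (x, t)) =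
        fun x₀ => ∫ t in (0:ℝ)..1, G (x₀, t) := funext fun x₀ => (key x₀).fderiv
    rw [Nat.cast_succ]
    refine contDiff_succ_iff_fderiv.mpr ⟨hdiffble, ?_, ?_⟩
    · intro h; exact absurd h (by simp)
    · rw [hfd]; exact IH _ G hGsm

theorem contDiff_param_integral' {k : ℕ}
    (F : ((Fin k → ℝ) × ℝ) → ℝ) (hF : ContDiff ℝ (⊤ : ℕ∞) F) :
    ContDiff ℝ (⊤ : ℕ∞) (fun x : Fin k → ℝ => ∫ t in (0:ℝ)..1, F (x, t)) :=
  contDiff_infty.mpr fun N => contDiff_param_integral N ℝ F hF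

/-- Hadamard's lemma. -/
theorem hadamard {k : ℕ} (f : (Fin k → ℝ) → ℝ) (hf : ContDiff ℝ (⊤ : ℕ∞) f)
    (a : Fin k → ℝ) :
    ∃ g : Fin k → ((Fin k → ℝ) → ℝ), (∀ i, ContDiff ℝ (⊤ : ℕ∞) (g i)) ∧
      ∀ x, f x = f a + ∑ i, (x i - a i) * g i x := by
  classical
  set γ : ((Fin k → ℝ) × ℝ) → (Fin k → ℝ) := fun p => a + p.2 • (p.1 - a) with hγ
  have hγsm : ContDiff ℝ (⊤ : ℕ∞) γ :=
    contDiff_const.add (contDiff_snd.smul (contDiff_fst.sub contDiff_const))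
  have hfd : ContDiff ℝ (⊤ : ℕ∞) (fderiv ℝ f) := (contDiff_infty_iff_fderiv.mp hf).2
  refine ⟨fun i x => ∫ t in (0:ℝ)..1, fderiv ℝ f (γ (x, t)) (Pi.single i 1), fun i => ?_, ?_⟩
  · exact contDiff_param_integral' _ ((hfd.comp hγsm).clm_apply contDiff_const)
  · intro x
    have hγ' : ∀ t : ℝ, HasDerivAt (fun t : ℝ => γ (x, t)) (x - a) t := by
      intro t
      simpa [hγ] using ((hasDerivAt_id t).smul_const (x - a)).const_add a
    have hφ : ∀ t : ℝ, HasDerivAt (fun t => f (γ (x, t)))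
        (fderiv ℝ f (γ (x, t)) (x - a)) t := fun t =>
      ((hf.differentiable (by simp) (γ (x, t))).hasFDerivAt).comp_hasDerivAt t (hγ' t)
    have hcont : Continuous fun t : ℝ => fderiv ℝ f (γ (x, t)) (x - a) :=
      ((hfd.comp hγsm).clm_apply contDiff_const).continuous.comp (Continuous.prodMk_right x)
    have h1 : ∫ t in (0:ℝ)..1, fderiv ℝ f (γ (x, t)) (x - a) =
        f (γ (x, 1)) - f (γ (x, 0)) :=
      integral_eq_sub_of_hasDerivAt (fun t _ => hφ t) (hcont.intervalIntegrable 0 1)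
    have hx1 : γ (x, 1) = x := by simp [hγ]
    have hx0 : γ (x, 0) = a := by simp [hγ]
    rw [hx1, hx0] at h1
    have h2 : ∀ y : Fin k → ℝ, fderiv ℝ f y (x - a) =
        ∑ i, (x i - a i) * fderiv ℝ f y (Pi.single i 1) := by
      intro y
      have hv : (x - a) = ∑ i, (x i - a i) • (Pi.single i (1:ℝ) : Fin k → ℝ) := by
        funext j
        simp [Finset.sum_apply, Pi.single_apply, Finset.sum_ite_eq, Pi.sub_apply]
      rw [hv, map_sum]
      simp [smul_eq_mul]
    have h3 : ∫ t in (0:ℝ)..1, fderiv ℝ f (γ (x, t)) (x - a) =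
        ∑ i, (x i - a i) * ∫ t in (0:ℝ)..1, fderiv ℝ f (γ (x, t)) (Pi.single i 1) := by
      rw [show (fun t => fderiv ℝ f (γ (x, t)) (x - a)) = fun t =>
        ∑ i, (x i - a i) * fderiv ℝ f (γ (x, t)) (Pi.single i 1) from funext fun t => h2 _]
      rw [intervalIntegral.integral_finset_sum]
      · exact Finset.sum_congr rfl fun i _ => intervalIntegral.integral_const_mul _ _
      · intro i _
        exact (continuous_const.mul (((hfd.comp hγsm).clm_apply
          contDiff_const).continuous.comp (Continuous.prodMk_right x))).intervalIntegrable 0 1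
    rw [h3] at h1
    linarith [h1]

open MvPolynomial in
theorem hadamard_iter {k : ℕ} (a : Fin k → ℝ) (N : ℕ) (f : (Fin k → ℝ) → ℝ)
    (hf : ContDiff ℝ (⊤ : ℕ∞) f) :
    ∃ (Q : MvPolynomial (Fin k) ℝ) (g : (Fin N → Fin k) → ((Fin k → ℝ) → ℝ)),
      (Q.totalDegree < N ∨ Q = 0) ∧ (∀ ι, ContDiff ℝ (⊤ : ℕ∞) (g ι)) ∧
      ∀ x, f x = MvPolynomial.eval (fun i => x i - a i) Q +
        ∑ ι : Fin N → Fin k, (∏ t, (x (ι t) - a (ι t))) * g ι x := by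
  classical
  induction N with
  | zero =>
    refine ⟨0, fun _ => f, Or.inr rfl, fun _ => hf, fun x => ?_⟩
    simp
  | succ N IH =>
    obtain ⟨Q, g, hQdeg, hgsm, hsum⟩ := IH
    choose h hhsm hh using fun ι => hadamard (g ι) (hgsm ι) a
    refine ⟨Q + ∑ ι : Fin N → Fin k, MvPolynomial.C (g ι a) * ∏ t, MvPolynomial.X (ι t),
      fun κ => h (Fin.tail κ) (κ 0), Or.inl ?_, fun κ => hhsm _ _, fun x => ?_⟩
    · refine lt_of_le_of_lt (totalDegree_add _ _) (max_lt ?_ ?_)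
      · rcases hQdeg with h1 | h1
        · exact lt_trans h1 (Nat.lt_succ_self N)
        · simp [h1, Nat.succ_pos]
      · refine lt_of_le_of_lt (totalDegree_finset_sum _ _) ?_
        rw [Finset.sup_lt_iff (by exact_mod_cast Nat.succ_pos N)]
        intro ι _
        refine lt_of_le_of_lt (totalDegree_mul _ _) ?_
        have h2 : (∏ t, (MvPolynomial.X (ι t) : MvPolynomial (Fin k) ℝ)).totalDegree ≤ N := by
          refine le_trans (totalDegree_finset_prod _ _) ?_
          simp [totalDegree_X]
        simp only [totalDegree_C, zero_add]
        exact lt_of_le_of_lt h2 (Nat.lt_succ_self N)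
    · rw [hsum x]
      have expand : ∀ ι : Fin N → Fin k,
          (∏ t, (x (ι t) - a (ι t))) * g ι x =
          (∏ t, (x (ι t) - a (ι t))) * g ι a +
          ∑ i, (∏ t, (x (ι t) - a (ι t))) * ((x i - a i) * h ι i x) := by
        intro ι
        rw [hh ι x, mul_add, Finset.mul_sum]
      rw [Finset.sum_congr rfl fun ι _ => expand ι, Finset.sum_add_distrib]
      have e1 : MvPolynomial.eval (fun i => x i - a i)
          (Q + ∑ ι : Fin N → Fin k, MvPolynomial.C (g ι a) * ∏ t, MvPolynomial.X (ι t)) =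
          MvPolynomial.eval (fun i => x i - a i) Q +
          ∑ ι : Fin N → Fin k, (∏ t, (x (ι t) - a (ι t))) * g ι a := by
        simp [map_sum, mul_comm]
      rw [e1]
      have e2 : ∑ κ : Fin (N+1) → Fin k, (∏ t, (x (κ t) - a (κ t))) * h (Fin.tail κ) (κ 0) x =
          ∑ p : Fin k × (Fin N → Fin k), (∏ t, (x ((Fin.cons p.1 p.2 : Fin (N+1) → Fin k) t) -
            a ((Fin.cons p.1 p.2 : Fin (N+1) → Fin k) t))) * h p.2 p.1 x := by
        refine (Fintype.sum_equiv (Fin.consEquiv (fun _ => Fin k)) _ _ ?_).symm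
        intro p
        simp [Fin.consEquiv, Fin.tail_cons]
      rw [e2, Fintype.sum_prod_type]
      have e3 : ∀ (i : Fin k) (ι : Fin N → Fin k),
          (∏ t, (x ((Fin.cons i ι : Fin (N+1) → Fin k) t) -
            a ((Fin.cons i ι : Fin (N+1) → Fin k) t))) * h ι i x =
          (∏ t, (x (ι t) - a (ι t))) * ((x i - a i) * h ι i x) := by
        intro i ι
        rw [Fin.prod_univ_succ]
        simp [Fin.cons_succ, Fin.cons_zero]
        ring
      rw [Finset.sum_congr rfl fun i _ => Finset.sum_congr rfl fun ι _ => e3 i ι]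
      rw [Finset.sum_comm]
      ring

theorem taylor_littleO (n : ℕ) : ∀ (φ : ℝ → ℝ), ContDiff ℝ (⊤ : ℕ∞) φ →
    (fun s => φ s - ∑ j ∈ Finset.range (n+1),
       (j.factorial : ℝ)⁻¹ * iteratedDeriv j φ 0 * s^j) =o[nhds 0] (fun s => s^n) := by
  induction n with
  | zero =>
    intro φ hφ
    simp only [Finset.range_one, Finset.sum_singleton, Nat.factorial_zero, Nat.cast_one,
      inv_one, iteratedDeriv_zero, pow_zero, one_mul, mul_one]
    rw [Asymptotics.isLittleO_one_iff]
    simpa using ((hφ.continuous.tendsto 0).sub (tendsto_const_nhds (x := φ 0)))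
  | succ n IH =>
    intro φ hφ
    set R : ℝ → ℝ := fun s => φ s - ∑ j ∈ Finset.range (n+2),
      (j.factorial : ℝ)⁻¹ * iteratedDeriv j φ 0 * s^j with hRdef
    have hTdiff : Differentiable ℝ (fun s : ℝ => ∑ j ∈ Finset.range (n+2),
        (j.factorial : ℝ)⁻¹ * iteratedDeriv j φ 0 * s^j) :=
      Differentiable.fun_sum fun j _ => (differentiable_pow j).const_mul _
    have hφdiff : Differentiable ℝ φ := hφ.differentiable (by simp)
    have hRdiff : Differentiable ℝ R := hφdiff.sub hTdiff
    have hR0 : R 0 = 0 := by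
      have : ∑ j ∈ Finset.range (n+2), (j.factorial : ℝ)⁻¹ * iteratedDeriv j φ 0 * (0:ℝ)^j
          = φ 0 := by
        rw [Finset.sum_eq_single_of_mem 0 (by simp [Nat.succ_pos])]
        · simp
        · intro j _ hj
          simp [zero_pow hj]
      simp [hRdef, this]
    have hderiv : ∀ s, deriv R s = deriv φ s - ∑ j ∈ Finset.range (n+1),
        (j.factorial : ℝ)⁻¹ * iteratedDeriv j (deriv φ) 0 * s^j := by
      intro s
      have h1 : deriv R s = deriv φ s - deriv (fun s : ℝ => ∑ j ∈ Finset.range (n+2),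
          (j.factorial : ℝ)⁻¹ * iteratedDeriv j φ 0 * s^j) s :=
        deriv_sub (hφdiff s) (hTdiff s)
      rw [h1]
      congr 1
      rw [deriv_fun_sum (fun j _ => ((differentiable_pow j).const_mul _) s)]
      have h2 : ∀ j : ℕ, deriv (fun s : ℝ => (j.factorial : ℝ)⁻¹ * iteratedDeriv j φ 0 * s^j) s
          = (j.factorial : ℝ)⁻¹ * iteratedDeriv j φ 0 * (j * s^(j-1)) := by
        intro j
        rw [deriv_const_mul _ (differentiable_pow j s), (hasDerivAt_pow j s).deriv]
      rw [Finset.sum_congr rfl fun j _ => h2 j]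
      rw [Finset.sum_range_succ']
      simp only [Nat.cast_zero, zero_mul, mul_zero, add_zero]
      refine Finset.sum_congr rfl fun j _ => ?_
      rw [← iteratedDeriv_succ']
      have hfac : ((j+1).factorial : ℝ) = (j+1) * (j.factorial : ℝ) := by
        rw [Nat.factorial_succ]; push_cast; ring
      rw [hfac]
      have h3 : ((j:ℝ)+1) ≠ 0 := by positivity
      have h4 : (j.factorial : ℝ) ≠ 0 := Nat.cast_ne_zero.mpr j.factorial_ne_zero
      field_simp
      push_cast [Nat.add_sub_cancel, Nat.add_sub_cancel_left]; ring
    have hR' : (deriv R) =o[nhds (0:ℝ)] fun s => s^n := by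
      have := IH (deriv φ) ((contDiff_infty_iff_deriv.mp hφ).2)
      rw [show deriv R = fun s => deriv φ s - ∑ j ∈ Finset.range (n+1),
        (j.factorial : ℝ)⁻¹ * iteratedDeriv j (deriv φ) 0 * s^j from funext hderiv]
      exact this
    rw [Asymptotics.isLittleO_iff]
    intro ε hε
    rw [Asymptotics.isLittleO_iff] at hR'
    have h5 := hR' hε
    rw [Metric.eventually_nhds_iff] at h5 ⊢
    obtain ⟨δ, hδ, hδ'⟩ := h5
    refine ⟨δ, hδ, fun s hs => ?_⟩
    have key : ‖R s - R 0‖ ≤ (ε * |s|^n) * ‖s - 0‖ := by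
      refine Convex.norm_image_sub_le_of_norm_hasDerivWithin_le
        (f := R) (f' := deriv R) (s := Metric.closedBall (0:ℝ) ‖s‖)
        (fun t ht => (hRdiff t).hasDerivAt.hasDerivWithinAt) (fun t ht => ?_)
        (convex_closedBall _ _) (Metric.mem_closedBall_self (norm_nonneg s))
        (by simpa using le_refl ‖s‖)
      have ht' : ‖t‖ ≤ ‖s‖ := by simpa using ht
      have htδ : dist t 0 < δ := by
        simp only [Real.dist_eq, sub_zero] at hs ⊢
        exact lt_of_le_of_lt ht' hs
      calc ‖deriv R t‖ ≤ ε * ‖t^n‖ := hδ' htδ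
        _ ≤ ε * |s|^n := by
            rw [Real.norm_eq_abs, abs_pow]
            exact mul_le_mul_of_nonneg_left (pow_le_pow_left₀ (abs_nonneg t)
              (by simpa [Real.norm_eq_abs] using ht') n) (le_of_lt hε)
    rw [hR0, sub_zero, sub_zero] at key
    calc ‖R s‖ ≤ (ε * |s|^n) * ‖s‖ := key
      _ = ε * ‖s^(n+1)‖ := by
          rw [Real.norm_eq_abs, Real.norm_eq_abs, abs_pow, pow_succ]; ring

theorem iteratedDeriv_line {k : ℕ} (j : ℕ) :
    ∀ (E : Type) [NormedAddCommGroup E] [NormedSpace ℝ E]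
      (f : (Fin k → ℝ) → E), ContDiff ℝ (⊤ : ℕ∞) f → ∀ (a v : Fin k → ℝ) (s : ℝ),
      iteratedDeriv j (fun s : ℝ => f (a + s • v)) s
        = iteratedFDeriv ℝ j f (a + s • v) (fun _ => v) := by
  induction j with
  | zero => intro E _ _ f hf a v s; simp [iteratedDeriv_zero]
  | succ j IH =>
    intro E _ _ f hf a v s
    rw [iteratedDeriv_succ']
    have hd : deriv (fun s : ℝ => f (a + s • v)) = fun s : ℝ => fderiv ℝ f (a + s • v) v := by
      funext t
      have hγ : HasDerivAt (fun s : ℝ => a + s • v) v t := by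
        simpa using ((hasDerivAt_id t).smul_const v).const_add a
      exact (((hf.differentiable (by simp)) _).hasFDerivAt.comp_hasDerivAt t hγ).deriv
    rw [hd]
    have hF : ContDiff ℝ (⊤ : ℕ∞) (fun y => fderiv ℝ f y v) :=
      ((contDiff_infty_iff_fderiv.mp hf).2).clm_apply contDiff_const
    rw [IH E (fun y => fderiv ℝ f y v) hF a v s]
    set x := a + s • v
    have hcomp : (fun y => fderiv ℝ f y v) =
        (ContinuousLinearMap.apply ℝ E v) ∘ (fderiv ℝ f) := rfl
    rw [hcomp, ContinuousLinearMap.iteratedFDeriv_comp_left _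
      ((contDiff_infty_iff_fderiv.mp hf).2.contDiffAt (x := x)) (mod_cast le_top)]
    rw [iteratedFDeriv_succ_apply_right]
    rfl

theorem poly_vanish : ∀ (n : ℕ) (u : ℕ → ℝ),
    ((fun s : ℝ => ∑ m ∈ Finset.range n, u m * s^m) =o[nhdsWithin (0:ℝ) {0}ᶜ]
      (fun s => s^(n-1))) → ∀ m < n, u m = 0 := by
  intro n
  induction n with
  | zero => intro u h m hm; omega
  | succ n IH =>
    intro u h
    have hne : ((nhdsWithin (0:ℝ) {0}ᶜ)).NeBot := by infer_instance
    have htend : Filter.Tendsto (fun s : ℝ => ∑ m ∈ Finset.range (n+1), u m * s^m)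
        (nhdsWithin (0:ℝ) {0}ᶜ) (nhds (u 0)) := by
      have hcont : Continuous (fun s : ℝ => ∑ m ∈ Finset.range (n+1), u m * s^m) :=
        continuous_finset_sum _ fun m _ => (continuous_const.mul (continuous_pow m))
      have h0 : Filter.Tendsto (fun s : ℝ => ∑ m ∈ Finset.range (n+1), u m * s^m)
          (nhdsWithin (0:ℝ) {0}ᶜ) (nhds (∑ m ∈ Finset.range (n+1), u m * (0:ℝ)^m)) :=
        (hcont.tendsto 0).mono_left nhdsWithin_le_nhds
      convert h0 using 2
      rw [Finset.sum_eq_single_of_mem 0 (by simp)]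
      · simp
      · intro j _ hj; simp [zero_pow hj]
    have hO1 : (fun s : ℝ => s^(n+1-1)) =O[nhdsWithin (0:ℝ) {0}ᶜ] (fun _ => (1:ℝ)) := by
      refine Asymptotics.isBigO_iff.mpr ⟨1, ?_⟩
      have : ∀ᶠ s in nhdsWithin (0:ℝ) {0}ᶜ, |s| ≤ 1 := by
        refine Filter.eventually_iff_exists_mem.mpr ⟨{0}ᶜ ∩ Metric.ball 0 1,
          inter_mem_nhdsWithin _ (Metric.ball_mem_nhds 0 one_pos), fun s hs => ?_⟩
        have := hs.2
        simp only [Metric.mem_ball, Real.dist_eq, sub_zero] at this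
        exact le_of_lt this
      filter_upwards [this] with s hs
      simp only [Real.norm_eq_abs, norm_one, mul_one, abs_pow]
      exact pow_le_one₀ (abs_nonneg s) hs
    have hu0 : u 0 = 0 := by
      have h2 : Filter.Tendsto (fun s : ℝ => ∑ m ∈ Finset.range (n+1), u m * s^m)
          (nhdsWithin (0:ℝ) {0}ᶜ) (nhds 0) :=
        (Asymptotics.isLittleO_one_iff ℝ).mp (h.trans_isBigO hO1)
      exact tendsto_nhds_unique htend h2
    intro m hm
    match m with
    | 0 => exact hu0
    | m + 1 =>
      rcases Nat.eq_zero_or_pos n with hn | hn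
      · omega
      · have hfact : ∀ s : ℝ, ∑ m ∈ Finset.range (n+1), u m * s^m =
            s * ∑ m ∈ Finset.range n, u (m+1) * s^m := by
          intro s
          rw [Finset.sum_range_succ' (fun m => u m * s^m) n, hu0, Finset.mul_sum]
          simp only [pow_zero, mul_one, zero_mul, add_zero]
          exact Finset.sum_congr rfl fun j _ => by ring
        have hq : (fun s : ℝ => ∑ m ∈ Finset.range n, u (m+1) * s^m)
            =o[nhdsWithin (0:ℝ) {0}ᶜ] (fun s => s^(n-1)) := by
          rw [Asymptotics.isLittleO_iff]
          intro ε hε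
          have h3 := (Asymptotics.isLittleO_iff.mp h) hε
          filter_upwards [h3, self_mem_nhdsWithin] with s hs hs0
          have hs0' : s ≠ 0 := hs0
          rw [hfact s] at hs
          have hpow : s^(n+1-1) = s * s^(n-1) := by
            rw [Nat.add_sub_cancel]
            conv_lhs => rw [show n = (n-1) + 1 from (Nat.succ_pred_eq_of_pos hn).symm]
            ring
          rw [hpow] at hs
          simp only [norm_mul, Real.norm_eq_abs] at hs ⊢
          have habs : 0 < |s| := abs_pos.mpr hs0'
          rw [mul_comm ε (|s| * _), mul_assoc] at hs
          calc |∑ m ∈ Finset.range n, u (m+1) * s^m| ≤ |s^(n-1)| * ε := by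
                exact le_of_mul_le_mul_left (by linarith [hs]) habs
            _ = ε * |s^(n-1)| := mul_comm _ _
        exact IH (fun m => u (m+1)) hq m (by omega)

open MvPolynomial in
theorem poly_eq_zero_of_littleO {k n : ℕ} (hn : 0 < n) (r : MvPolynomial (Fin k) ℝ)
    (hdeg : r.totalDegree < n)
    (h : ∀ v : Fin k → ℝ, (fun s : ℝ => MvPolynomial.eval (fun i => s * v i) r)
      =o[nhds (0:ℝ)] (fun s => s^(n-1))) : r = 0 := by
  classical
  apply MvPolynomial.funext
  intro v
  simp only [map_zero]
  set u : ℕ → ℝ := fun m => ∑ d ∈ r.support.filter (fun d => (d.sum fun _ e => e) = m),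
    r.coeff d * ∏ i, v i ^ d i with hu
  have hgroup : ∀ s : ℝ, MvPolynomial.eval (fun i => s * v i) r
      = ∑ m ∈ Finset.range n, u m * s^m := by
    intro s
    rw [MvPolynomial.eval_eq']
    have hterm : ∀ d : (Fin k) →₀ ℕ,
        r.coeff d * ∏ i, (s * v i) ^ d i
        = (r.coeff d * ∏ i, v i ^ d i) * s ^ (d.sum fun _ e => e) := by
      intro d
      have h1 : ∏ i, (s * v i) ^ d i = (∏ i, s ^ d i) * ∏ i, v i ^ d i := by
        rw [← Finset.prod_mul_distrib]
        exact Finset.prod_congr rfl fun i _ => mul_pow s (v i) (d i)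
      have h2 : ∏ i, s ^ d i = s ^ (d.sum fun _ e => e) := by
        rw [Finset.prod_pow_eq_pow_sum]
        congr 1
        exact (Finsupp.sum_fintype d (fun _ e => e) fun _ => rfl).symm
      rw [h1, h2]; ring
    rw [Finset.sum_congr rfl fun d _ => hterm d]
    rw [← Finset.sum_fiberwise_of_maps_to (g := fun d : (Fin k) →₀ ℕ => d.sum fun _ e => e)
      (t := Finset.range n) (fun d hd => Finset.mem_range.mpr
        (lt_of_le_of_lt (MvPolynomial.le_totalDegree hd) hdeg))]
    refine Finset.sum_congr rfl fun m _ => ?_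
    rw [hu, Finset.sum_mul]
    refine Finset.sum_congr rfl fun d hd => ?_
    rw [(Finset.mem_filter.mp hd).2]
  have hlo : (fun s : ℝ => ∑ m ∈ Finset.range n, u m * s^m)
      =o[nhdsWithin (0:ℝ) {0}ᶜ] (fun s => s^(n-1)) := by
    have := (h v).mono (nhdsWithin_le_nhds (s := {0}ᶜ))
    rwa [show (fun s : ℝ => MvPolynomial.eval (fun i => s * v i) r)
      = fun s : ℝ => ∑ m ∈ Finset.range n, u m * s^m from funext hgroup] at this
  have hvan := poly_vanish n u hlo
  have h1 : MvPolynomial.eval v r = ∑ m ∈ Finset.range n, u m * (1:ℝ)^m := by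
    have := hgroup 1
    simpa using this
  rw [h1, Finset.sum_congr rfl fun m hm => by rw [hvan m (Finset.mem_range.mp hm)]]
  simp

open MvPolynomial in
noncomputable def Tpoly {k : ℕ} (n : ℕ) (f : (Fin k → ℝ) → ℝ) (a : Fin k → ℝ) :
    MvPolynomial (Fin k) ℝ :=
  ∑ j ∈ Finset.range n, ∑ ι : Fin j → Fin k,
    MvPolynomial.C ((j.factorial : ℝ)⁻¹ *
      iteratedFDeriv ℝ j f a (fun t => Pi.single (ι t) 1)) * ∏ t, MvPolynomial.X (ι t)

open MvPolynomial in
theorem Tpoly_totalDegree {k : ℕ} (n : ℕ) (hn : 0 < n) (f : (Fin k → ℝ) → ℝ)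
    (a : Fin k → ℝ) : (Tpoly n f a).totalDegree < n := by
  classical
  refine lt_of_le_of_lt (totalDegree_finset_sum _ _) ?_
  rw [Finset.sup_lt_iff (by exact_mod_cast hn)]
  intro j hj
  refine lt_of_le_of_lt (totalDegree_finset_sum _ _) ?_
  rw [Finset.sup_lt_iff (by exact_mod_cast hn)]
  intro ι _
  refine lt_of_le_of_lt (totalDegree_mul _ _) ?_
  have h2 : (∏ t, (MvPolynomial.X (ι t) : MvPolynomial (Fin k) ℝ)).totalDegree ≤ j := by
    refine le_trans (totalDegree_finset_prod _ _) ?_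
    simp [totalDegree_X]
  simp only [totalDegree_C, zero_add]
  exact lt_of_le_of_lt h2 (Finset.mem_range.mp hj)

open MvPolynomial in
theorem Tpoly_eval_ray {k : ℕ} (n : ℕ) (f : (Fin k → ℝ) → ℝ) (hf : ContDiff ℝ (⊤ : ℕ∞) f)
    (a v : Fin k → ℝ) (s : ℝ) :
    MvPolynomial.eval (fun i => s * v i) (Tpoly n f a)
      = ∑ j ∈ Finset.range n, (j.factorial : ℝ)⁻¹ *
          iteratedDeriv j (fun s : ℝ => f (a + s • v)) 0 * s^j := by
  classical
  rw [Tpoly, map_sum]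
  refine Finset.sum_congr rfl fun j _ => ?_
  rw [map_sum]
  have hterm : ∀ ι : Fin j → Fin k,
      MvPolynomial.eval (fun i => s * v i)
        (MvPolynomial.C ((j.factorial : ℝ)⁻¹ *
          iteratedFDeriv ℝ j f a (fun t => Pi.single (ι t) 1)) * ∏ t, MvPolynomial.X (ι t))
      = (j.factorial : ℝ)⁻¹ * ((∏ t, v (ι t)) •
          iteratedFDeriv ℝ j f a (fun t => Pi.single (ι t) 1)) * s^j := by
    intro ι
    rw [map_mul, MvPolynomial.eval_C, map_prod]
    simp only [MvPolynomial.eval_X]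
    have : ∏ t : Fin j, (s * v (ι t)) = s^j * ∏ t, v (ι t) := by
      rw [Finset.prod_mul_distrib, Finset.prod_const]
      simp
    rw [this, smul_eq_mul]
    ring
  rw [Finset.sum_congr rfl fun ι _ => hterm ι]
  have hmulti : ∑ ι : Fin j → Fin k, (∏ t, v (ι t)) •
        iteratedFDeriv ℝ j f a (fun t => Pi.single (ι t) 1)
      = iteratedFDeriv ℝ j f a (fun _ => v) := by
    have hv : (fun _ : Fin j => v) =
        fun _ : Fin j => ∑ i : Fin k, v i • (Pi.single i (1:ℝ) : Fin k → ℝ) := by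
      funext t j'
      simp [Finset.sum_apply, Pi.single_apply, Finset.sum_ite_eq]
    rw [hv]
    have h5 := (iteratedFDeriv ℝ j f a).toMultilinearMap.map_sum
      (g := fun _ i => v i • (Pi.single i (1:ℝ) : Fin k → ℝ))
    refine Eq.trans ?_ h5.symm
    refine Finset.sum_congr rfl fun ι _ => ?_
    exact ((iteratedFDeriv ℝ j f a).toMultilinearMap.map_smul_univ
      (fun t => v (ι t)) (fun t => Pi.single (ι t) 1)).symm
  rw [← Finset.sum_mul, ← Finset.mul_sum, hmulti,
    iteratedDeriv_line j ℝ f hf a v 0]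
  simp

open MvPolynomial Filter Asymptotics in
theorem Q_eq_Tpoly {k n : ℕ} (hn : 0 < n) (f : (Fin k → ℝ) → ℝ)
    (hf : ContDiff ℝ (⊤ : ℕ∞) f) (a : Fin k → ℝ)
    (Q : MvPolynomial (Fin k) ℝ) (hQdeg : Q.totalDegree < n ∨ Q = 0)
    (g : (Fin n → Fin k) → ((Fin k → ℝ) → ℝ)) (hg : ∀ ι, ContDiff ℝ (⊤ : ℕ∞) (g ι))
    (hid : ∀ x, f x = MvPolynomial.eval (fun i => x i - a i) Q +
        ∑ ι : Fin n → Fin k, (∏ t, (x (ι t) - a (ι t))) * g ι x) :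
    Q = Tpoly n f a := by
  classical
  have hsub : (Q - Tpoly n f a).totalDegree < n := by
    refine lt_of_le_of_lt (totalDegree_sub _ _) (max_lt ?_ (Tpoly_totalDegree n hn f a))
    rcases hQdeg with h | h
    · exact h
    · simp [h, hn]
  have key : ∀ v : Fin k → ℝ, (fun s : ℝ =>
      MvPolynomial.eval (fun i => s * v i) (Q - Tpoly n f a))
        =o[nhds (0:ℝ)] (fun s => s^(n-1)) := by
    intro v
    have hA : (fun s : ℝ => f (a + s • v) - MvPolynomial.eval (fun i => s * v i) Q)
        =o[nhds (0:ℝ)] (fun s => s^(n-1)) := by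
      set H : ℝ → ℝ := fun s => ∑ ι : Fin n → Fin k,
        (∏ t, v (ι t)) * g ι (a + s • v) with hH
      have hHcont : Continuous H := by
        refine continuous_finset_sum _ fun ι _ => Continuous.mul continuous_const ?_
        exact (hg ι).continuous.comp (continuous_const.add (continuous_id.smul continuous_const))
      have hAeq : ∀ s : ℝ, f (a + s • v) - MvPolynomial.eval (fun i => s * v i) Q
          = s^n * H s := by
        intro s
        have h1 := hid (a + s • v)
        have h2 : (fun i => (a + s • v) i - a i) = fun i => s * v i := by
          funext i; simp [Pi.add_apply, Pi.smul_apply, smul_eq_mul]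
        rw [h2] at h1
        rw [h1]
        rw [hH, Finset.mul_sum]
        have h3 : ∀ ι : Fin n → Fin k, (∏ t, ((a + s • v) (ι t) - a (ι t))) * g ι (a + s • v)
            = s^n * ((∏ t, v (ι t)) * g ι (a + s • v)) := by
          intro ι
          have h4 : ∀ t : Fin n, (a + s • v) (ι t) - a (ι t) = s * v (ι t) := by
            intro t; simp [smul_eq_mul]
          rw [Finset.prod_congr rfl fun t _ => h4 t, Finset.prod_mul_distrib,
            Finset.prod_const]
          simp only [Finset.card_univ, Fintype.card_fin]
          ring
        rw [Finset.sum_congr rfl fun ι _ => h3 ι]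
        ring
      rw [show (fun s : ℝ => f (a + s • v) - MvPolynomial.eval (fun i => s * v i) Q)
        = fun s => s^n * H s from funext hAeq]
      have hbigO : (fun s : ℝ => s^n * H s) =O[nhds (0:ℝ)] (fun s => s^n) := by
        refine Asymptotics.isBigO_iff.mpr ⟨|H 0| + 1, ?_⟩
        have : ∀ᶠ s : ℝ in nhds 0, |H s - H 0| < 1 := by
          have := Metric.tendsto_nhds.mp (hHcont.tendsto 0) 1 one_pos
          simpa [Real.dist_eq] using this
        filter_upwards [this] with s hs
        have : |H s| ≤ |H 0| + 1 := by
          have := abs_sub_abs_le_abs_sub (H s) (H 0)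
          linarith
        simp only [Real.norm_eq_abs, abs_mul]
        exact mul_le_mul_of_nonneg_left this (abs_nonneg _) |>.trans_eq (by ring)
      refine hbigO.trans_isLittleO ?_
      exact Asymptotics.isLittleO_pow_pow (Nat.sub_lt hn one_pos)
    have hB : (fun s : ℝ => f (a + s • v) - MvPolynomial.eval (fun i => s * v i) (Tpoly n f a))
        =o[nhds (0:ℝ)] (fun s => s^(n-1)) := by
      have hφ : ContDiff ℝ (⊤ : ℕ∞) (fun s : ℝ => f (a + s • v)) := by
        refine hf.comp ?_
        exact contDiff_const.add (contDiff_id.smul contDiff_const)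
      have := taylor_littleO (n-1) (fun s : ℝ => f (a + s • v)) hφ
      rw [show n - 1 + 1 = n from by omega] at this
      rw [show (fun s : ℝ => f (a + s • v) -
          MvPolynomial.eval (fun i => s * v i) (Tpoly n f a))
        = fun s : ℝ => f (a + s • v) - ∑ j ∈ Finset.range n,
          (j.factorial : ℝ)⁻¹ * iteratedDeriv j (fun s : ℝ => f (a + s • v)) 0 * s^j from
        funext fun s => by rw [Tpoly_eval_ray n f hf a v s]]
      exact this
    have := hB.sub hA
    rw [show (fun s : ℝ => (f (a + s • v) - MvPolynomial.eval (fun i => s * v i) (Tpoly n f a))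
        - (f (a + s • v) - MvPolynomial.eval (fun i => s * v i) Q))
      = fun s : ℝ => MvPolynomial.eval (fun i => s * v i) (Q - Tpoly n f a) from
      funext fun s => by rw [map_sub]; ring] at this
    exact this
  have := poly_eq_zero_of_littleO hn (Q - Tpoly n f a) hsub key
  exact sub_eq_zero.mp this

end Aux

/-! ### Algebraic properties of compatible `C^∞`-structures -/

section OpAlg

variable {W : Type} [CommRing W] [Algebra ℝ W] (S : CInftyRingStruct W)
  (hS : CInftyCompatible S) {k : ℕ} (c : Fin k → W)

omit [CommRing W] [Algebra ℝ W] in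
theorem op_congr {f g : (Fin k → ℝ) → ℝ} (h : ∀ x, f x = g x) :
    S.op f c = S.op g c := by rw [funext h]

theorem contDiff_proj (i : Fin k) : ContDiff ℝ (⊤ : ℕ∞) (fun x : Fin k → ℝ => x i) :=
  contDiff_apply ℝ ℝ i

include hS

theorem op_one : S.op (fun _ : Fin k → ℝ => (1:ℝ)) c = 1 := by
  have h := S.op_comp (n := k) (fun _ : Fin 0 → ℝ => (1:ℝ)) (fun i => i.elim0)
    contDiff_const (fun i => i.elim0) c
  simpa using h.trans (hS.2.2.2.1 _)

theorem op_const (r : ℝ) : S.op (fun _ : Fin k → ℝ => r) c = algebraMap ℝ W r := by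
  have h := S.op_comp (n := k) (fun y : Fin 1 → ℝ => r * y 0)
    (fun _ => fun _ : Fin k → ℝ => (1:ℝ))
    (contDiff_const.mul (contDiff_apply ℝ ℝ 0)) (fun _ => contDiff_const) c
  simp only [mul_one] at h
  rw [h, hS.2.2.1 r, op_one S hS c, Algebra.algebraMap_eq_smul_one]

theorem op_add {f g : (Fin k → ℝ) → ℝ} (hf : ContDiff ℝ (⊤ : ℕ∞) f)
    (hg : ContDiff ℝ (⊤ : ℕ∞) g) :
    S.op (fun x => f x + g x) c = S.op f c + S.op g c := by
  have h := S.op_comp (n := k) (fun y : Fin 2 → ℝ => y 0 + y 1) ![f, g]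
    (((contDiff_apply ℝ ℝ 0)).add ((contDiff_apply ℝ ℝ 1)))
    (fun i => by fin_cases i <;> simpa) c
  simp only [Matrix.cons_val_zero, Matrix.cons_val_one, Matrix.head_cons] at h
  rw [h, hS.1]
  simp [Matrix.cons_val_zero, Matrix.cons_val_one, Matrix.head_cons]

theorem op_mul {f g : (Fin k → ℝ) → ℝ} (hf : ContDiff ℝ (⊤ : ℕ∞) f)
    (hg : ContDiff ℝ (⊤ : ℕ∞) g) :
    S.op (fun x => f x * g x) c = S.op f c * S.op g c := by
  have h := S.op_comp (n := k) (fun y : Fin 2 → ℝ => y 0 * y 1) ![f, g]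
    (((contDiff_apply ℝ ℝ 0)).mul ((contDiff_apply ℝ ℝ 1)))
    (fun i => by fin_cases i <;> simpa) c
  simp only [Matrix.cons_val_zero, Matrix.cons_val_one, Matrix.head_cons] at h
  rw [h, hS.2.1]
  simp [Matrix.cons_val_zero, Matrix.cons_val_one, Matrix.head_cons]

theorem op_sum {ι : Type*} (s : Finset ι) (F : ι → (Fin k → ℝ) → ℝ)
    (hF : ∀ i, ContDiff ℝ (⊤ : ℕ∞) (F i)) :
    S.op (fun x => ∑ i ∈ s, F i x) c = ∑ i ∈ s, S.op (F i) c := by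
  classical
  induction s using Finset.induction with
  | empty =>
    simp only [Finset.sum_empty]
    rw [show (fun _ : Fin k → ℝ => (0:ℝ)) = fun _ : Fin k → ℝ => ((0:ℝ)) from rfl,
      op_const S hS c 0, map_zero]
  | insert j s' hnot ih =>
    rw [Finset.sum_insert hnot, ← ih]
    rw [op_congr S c (g := fun x => F j x + ∑ i ∈ s', F i x)
      (fun x => Finset.sum_insert hnot)]
    exact op_add S hS c (hF j) (ContDiff.sum fun i _ => hF i)

theorem op_prod {ι : Type*} (s : Finset ι) (F : ι → (Fin k → ℝ) → ℝ)
    (hF : ∀ i, ContDiff ℝ (⊤ : ℕ∞) (F i)) :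
    S.op (fun x => ∏ i ∈ s, F i x) c = ∏ i ∈ s, S.op (F i) c := by
  classical
  induction s using Finset.induction with
  | empty =>
    simp only [Finset.prod_empty]
    exact op_one S hS c
  | insert j s' hnot ih =>
    rw [Finset.prod_insert hnot, ← ih]
    rw [op_congr S c (g := fun x => F j x * ∏ i ∈ s', F i x)
      (fun x => Finset.prod_insert hnot)]
    exact op_mul S hS c (hF j) (contDiff_prod fun i _ => hF i)

omit hS in
theorem contDiff_mvpoly_eval (P : MvPolynomial (Fin k) ℝ) :
    ContDiff ℝ (⊤ : ℕ∞) (fun x : Fin k → ℝ => MvPolynomial.eval x P) := by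
  induction P using MvPolynomial.induction_on with
  | C r => simpa using contDiff_const (c := r)
  | add p q hp hq => simp only [map_add]; exact hp.add hq
  | mul_X p i hp => simp only [map_mul, MvPolynomial.eval_X]
                    exact hp.mul (contDiff_proj i)

theorem op_poly (P : MvPolynomial (Fin k) ℝ) :
    S.op (fun x => MvPolynomial.eval x P) c = MvPolynomial.aeval c P := by
  induction P using MvPolynomial.induction_on with
  | C r => simpa using op_const S hS c r
  | add p q hp hq =>
    rw [op_congr S c (g := fun x => MvPolynomial.eval x p + MvPolynomial.eval x q)
      (fun x => by simp), op_add S hS c (contDiff_mvpoly_eval p)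
      (contDiff_mvpoly_eval q), hp, hq, map_add]
  | mul_X p i hp =>
    rw [op_congr S c (g := fun x => MvPolynomial.eval x p * x i) (fun x => by simp),
      op_mul S hS c (contDiff_mvpoly_eval p) (contDiff_proj i), hp, S.op_proj, map_mul,
      MvPolynomial.aeval_X]

end OpAlg

theorem prod_mem_ideal_pow {R : Type} [CommRing R] (I : Ideal R) {ι : Type*}
    (s : Finset ι) (f : ι → R) (h : ∀ i ∈ s, f i ∈ I) :
    ∏ i ∈ s, f i ∈ I ^ s.card := by
  classical
  induction s using Finset.induction with
  | empty => simp [Ideal.one_eq_top]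
  | insert a s' hnot ih =>
    rw [Finset.prod_insert hnot, Finset.card_insert_of_notMem hnot, pow_succ, mul_comm (I ^ _) I]
    exact Ideal.mul_mem_mul (h a (Finset.mem_insert_self a s'))
      (ih fun i hi => h i (Finset.mem_insert_of_mem hi))

/-- The main computation: over any compatible `C^∞`-structure the operations are given by
the Taylor expansion. -/
theorem op_taylor {W : Type} [CommRing W] [Algebra ℝ W] (n : ℕ) (hn : 0 < n)
    (𝔪 : Ideal W) (hnil : 𝔪 ^ n = ⊥)
    (S : CInftyRingStruct W) (hS : CInftyCompatible S)
    {k : ℕ} (f : (Fin k → ℝ) → ℝ) (hf : ContDiff ℝ (⊤ : ℕ∞) f)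
    (c : Fin k → W) (lam : Fin k → ℝ) (m : Fin k → W)
    (hc : ∀ i, c i = algebraMap ℝ W (lam i) + m i) (hm : ∀ i, m i ∈ 𝔪) :
    S.op f c = ∑ j ∈ Finset.range n, (j.factorial : ℝ)⁻¹ •
      ∑ ι : Fin j → Fin k,
        (iteratedFDeriv ℝ j f lam (fun t => Pi.single (ι t) 1)) • ∏ t : Fin j, m (ι t) := by
  classical
  obtain ⟨Q, g, hQdeg, hg, hid⟩ := hadamard_iter lam n f hf
  have hQT : Q = Tpoly n f lam := Q_eq_Tpoly hn f hf lam Q hQdeg g hg hid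
  have hmc : ∀ i, c i - algebraMap ℝ W (lam i) = m i := by
    intro i; rw [hc i]; ring
  -- smoothness of the two pieces
  have hinner : ContDiff ℝ (⊤ : ℕ∞) (fun x : Fin k → ℝ => (fun i => x i - lam i)) := by
    exact contDiff_id.sub contDiff_const
  have hsm1 : ContDiff ℝ (⊤ : ℕ∞)
      (fun x : Fin k → ℝ => MvPolynomial.eval (fun i => x i - lam i) Q) :=
    (contDiff_mvpoly_eval Q).comp hinner
  have hfac : ∀ (N : ℕ) (ι : Fin N → Fin k), ContDiff ℝ (⊤ : ℕ∞)
      (fun x : Fin k → ℝ => ∏ t : Fin N, (x (ι t) - lam (ι t))) := by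
    intro N ι
    exact contDiff_prod fun t _ => (contDiff_proj (ι t)).sub contDiff_const
  have hsm2 : ContDiff ℝ (⊤ : ℕ∞) (fun x : Fin k → ℝ =>
      ∑ ι : Fin n → Fin k, (∏ t, (x (ι t) - lam (ι t))) * g ι x) :=
    ContDiff.sum fun ι _ => (hfac n ι).mul (hg ι)
  -- split
  have hsplit : S.op f c =
      S.op (fun x => MvPolynomial.eval (fun i => x i - lam i) Q) c +
      S.op (fun x => ∑ ι : Fin n → Fin k, (∏ t, (x (ι t) - lam (ι t))) * g ι x) c := by
    rw [← op_add S hS c hsm1 hsm2]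
    exact op_congr S c hid
  -- evaluate the single factors
  have hfactor : ∀ i : Fin k, S.op (fun x : Fin k → ℝ => x i - lam i) c = m i := by
    intro i
    rw [op_congr S c (g := fun x : Fin k → ℝ => x i + (fun _ : Fin k → ℝ => -lam i) x)
      (fun x => by ring)]
    rw [op_add S hS c (contDiff_proj i) contDiff_const, S.op_proj,
      op_const S hS c (-lam i), map_neg, ← sub_eq_add_neg, hmc i]
  -- second piece is zero
  have hzero : S.op (fun x => ∑ ι : Fin n → Fin k,
      (∏ t, (x (ι t) - lam (ι t))) * g ι x) c = 0 := by
    rw [op_sum S hS c Finset.univ _ (fun ι => (hfac n ι).mul (hg ι))]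
    refine Finset.sum_eq_zero fun ι _ => ?_
    rw [op_mul S hS c (hfac n ι) (hg ι),
      op_prod S hS c Finset.univ _ (fun t => (contDiff_proj (ι t)).sub contDiff_const)]
    have hprod : ∏ t : Fin n, S.op (fun x : Fin k → ℝ => x (ι t) - lam (ι t)) c
        = ∏ t : Fin n, m (ι t) := Finset.prod_congr rfl fun t _ => hfactor (ι t)
    rw [hprod]
    have hmem : ∏ t : Fin n, m (ι t) ∈ 𝔪 ^ n := by
      have := prod_mem_ideal_pow 𝔪 Finset.univ (fun t : Fin n => m (ι t))
        (fun t _ => hm (ι t))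
      simpa using this
    rw [hnil] at hmem
    rw [Ideal.mem_bot.mp hmem, zero_mul]
  -- first piece: polynomial evaluation
  have hQ' : S.op (fun x => MvPolynomial.eval (fun i => x i - lam i) Q) c =
      MvPolynomial.aeval m Q := by
    set Q' : MvPolynomial (Fin k) ℝ :=
      MvPolynomial.bind₁ (fun i => MvPolynomial.X i - MvPolynomial.C (lam i)) Q with hQ'def
    have heq : ∀ x : Fin k → ℝ, MvPolynomial.eval (fun i => x i - lam i) Q
        = MvPolynomial.eval x Q' := by
      intro x
      rw [hQ'def]
      rw [show MvPolynomial.eval x Q' = MvPolynomial.aeval x Q' from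
        (DFunLike.congr_fun (MvPolynomial.coe_aeval_eq_eval x) Q').symm]
      rw [hQ'def, MvPolynomial.aeval_bind₁]
      rw [show MvPolynomial.eval (fun i => x i - lam i) Q
        = MvPolynomial.aeval (fun i => x i - lam i) Q from
        (DFunLike.congr_fun (MvPolynomial.coe_aeval_eq_eval _) Q).symm]
      rw [show (fun i => MvPolynomial.aeval x
          (MvPolynomial.X i - MvPolynomial.C (lam i))) = (fun i => x i - lam i) from
        funext fun i => by simp]
    rw [op_congr S c heq, op_poly S hS c Q', hQ'def, MvPolynomial.aeval_bind₁]
    have harg : (fun i => MvPolynomial.aeval c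
        (MvPolynomial.X i - MvPolynomial.C (lam i))) = m := by
      funext i
      simp only [map_sub, MvPolynomial.aeval_X, MvPolynomial.aeval_C]
      exact hmc i
    rw [harg]
  rw [hsplit, hzero, add_zero, hQ', hQT]
  -- compute aeval of Tpoly
  rw [Tpoly, map_sum]
  refine Finset.sum_congr rfl fun j _ => ?_
  rw [map_sum, Finset.smul_sum]
  refine Finset.sum_congr rfl fun ι _ => ?_
  rw [map_mul, MvPolynomial.aeval_C, map_prod]
  simp only [MvPolynomial.aeval_X, Algebra.smul_def, map_mul]
  ring

/-- A Weil algebra `W` (finite-dimensional local commutative `ℝ`-algebra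
with maximal ideal `𝔪`, `𝔪^n = 0`, residue field `ℝ`) admits at most one `C^∞`-ring
structure compatible with its `ℝ`-algebra structure, and the operations are given by the
order-`(n-1)` Taylor polynomial of `f` around the residues, evaluated on the nilpotent
parts. -/
theorem weil_algebra_unique_CInfty_structure
    (W : Type) [CommRing W] [Algebra ℝ W] (hfd : FiniteDimensional ℝ W)
    (n : ℕ) (hn : 0 < n) (𝔪 : Ideal W) (hmax : 𝔪.IsMaximal) (hnil : 𝔪 ^ n = ⊥)
    (hres : ∀ w : W, ∃ r : ℝ, w - algebraMap ℝ W r ∈ 𝔪)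
    (S : CInftyRingStruct W) (hS : CInftyCompatible S) :
    (∀ T : CInftyRingStruct W, CInftyCompatible T →
      ∀ (k : ℕ) (f : (Fin k → ℝ) → ℝ), ContDiff ℝ (⊤ : ℕ∞) f →
        ∀ c : Fin k → W, S.op f c = T.op f c) ∧
    ∀ (k : ℕ) (f : (Fin k → ℝ) → ℝ), ContDiff ℝ (⊤ : ℕ∞) f →
      ∀ (c : Fin k → W) (lam : Fin k → ℝ) (m : Fin k → W),
        (∀ i, c i = algebraMap ℝ W (lam i) + m i) → (∀ i, m i ∈ 𝔪) →
        S.op f c = ∑ j ∈ Finset.range n, (j.factorial : ℝ)⁻¹ •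
          ∑ ι : Fin j → Fin k,
            (iteratedFDeriv ℝ j f lam (fun t => Pi.single (ι t) 1)) •
              ∏ t : Fin j, m (ι t) := by
  constructor
  · intro T hT k f hf c
    have hlam : ∀ i : Fin k, ∃ r : ℝ, c i - algebraMap ℝ W r ∈ 𝔪 := fun i => hres (c i)
    choose lam hmem using hlam
    set m : Fin k → W := fun i => c i - algebraMap ℝ W (lam i) with hmdef
    have hc : ∀ i, c i = algebraMap ℝ W (lam i) + m i := by
      intro i; rw [hmdef]; ring
    rw [op_taylor n hn 𝔪 hnil S hS f hf c lam m hc hmem,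
      op_taylor n hn 𝔪 hnil T hT f hf c lam m hc hmem]
  · intro k f hf c lam m hc hm
    exact op_taylor n hn 𝔪 hnil S hS f hf c lam m hc hm
end

section
/- Let I be an ideal of C^∞(ℝ^n) containing the ideal 𝔪_X^∞ of functions all of whose derivatives vanish on a closed set X ⊆ ℝ^n, in the sense that I = (f_1,...,f_k, 𝔪_X^∞) is generated by finitely many functions together with 𝔪_X^∞ (a 'good' ideal). Then I is fair (germ-determined): a function f ∈ C^∞(ℝ^n) lies in I if and only if for every p ∈ ℝ^n the germ π_p(f) lies in the ideal π_p(I) of the ring of germs C^∞_p(ℝ^n). (Consequently, good C^∞-rings are fair.) -/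
set_option synthInstance.maxHeartbeats 1000000
set_option maxHeartbeats 1000000

/-- The ideal `𝔪_X^∞` of smooth functions all of whose derivatives vanish on the closed
set `X ⊆ ℝ^n`, as a set of elements of `C^∞(ℝ^n)`. -/
def flatOn (n : ℕ) (X : Set (Fin n → ℝ)) : Set (SmoothAlg n) :=
  {g : SmoothAlg n | ∀ x ∈ X, ∀ j : ℕ, iteratedFDeriv ℝ j (g : (Fin n → ℝ) → ℝ) x = 0}

open Function Filter Set
open scoped Topology Manifold

lemma coe_le_top' (i : ℕ) : (i : WithTop ℕ∞) ≤ ((⊤ : ℕ∞) : WithTop ℕ∞) := by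
  exact_mod_cast le_top

lemma flatAt_mul {m : ℕ} {φ g : (Fin m → ℝ) → ℝ} (hφ : ContDiff ℝ (⊤ : ℕ∞) φ)
    (hg : ContDiff ℝ (⊤ : ℕ∞) g) {x : Fin m → ℝ}
    (hx : ∀ j : ℕ, iteratedFDeriv ℝ j g x = 0) (j : ℕ) :
    iteratedFDeriv ℝ j (fun y => φ y * g y) x = 0 := by
  have hb := norm_iteratedFDeriv_mul_le (𝕜 := ℝ) hφ hg x (coe_le_top' j)
  rw [← norm_le_zero_iff]
  refine hb.trans (le_of_eq ?_)
  refine Finset.sum_eq_zero fun i _ => ?_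
  rw [hx (j - i)]
  simp

lemma iteratedFDeriv_congr_nhds {m : ℕ} {f g : (Fin m → ℝ) → ℝ} {x : Fin m → ℝ}
    (h : f =ᶠ[𝓝 x] g) (j : ℕ) : iteratedFDeriv ℝ j f x = iteratedFDeriv ℝ j g x := by
  rw [← iteratedFDerivWithin_univ, ← iteratedFDerivWithin_univ]
  exact Filter.EventuallyEq.iteratedFDerivWithin_eq
    (by simpa [nhdsWithin_univ] using h) h.eq_of_nhds j

lemma flatAt_sum {m : ℕ} {ι : Type*} (S : Finset ι) (g : ι → (Fin m → ℝ) → ℝ)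
    (hs : ∀ i ∈ S, ContDiff ℝ (⊤ : ℕ∞) (g i)) {x : Fin m → ℝ}
    (hflat : ∀ i ∈ S, ∀ j : ℕ, iteratedFDeriv ℝ j (g i) x = 0) (j : ℕ) :
    iteratedFDeriv ℝ j (fun y => ∑ i ∈ S, g i y) x = 0 := by
  classical
  induction S using Finset.induction with
  | empty => simpa using congrFun (iteratedFDeriv_zero_fun (𝕜 := ℝ) (n := j)
      (E := Fin m → ℝ) (F := ℝ)) x
  | @insert a S ha ih =>
    have hga : ContDiff ℝ (⊤ : ℕ∞) (g a) := hs a (Finset.mem_insert_self a S)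
    have hgs : ContDiff ℝ (⊤ : ℕ∞) (fun y => ∑ i ∈ S, g i y) :=
      ContDiff.sum fun i hi => hs i (Finset.mem_insert_of_mem hi)
    have heq : (fun y => ∑ i ∈ insert a S, g i y)
        = g a + fun y => ∑ i ∈ S, g i y := by
      funext y; rw [Finset.sum_insert ha]; rfl
    rw [heq, iteratedFDeriv_add_apply (hga.of_le (coe_le_top' j)).contDiffAt
      (hgs.of_le (coe_le_top' j)).contDiffAt,
      hflat a (Finset.mem_insert_self a S) j,
      ih (fun i hi => hs i (Finset.mem_insert_of_mem hi))
        (fun i hi => hflat i (Finset.mem_insert_of_mem hi))]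
    simp

/-- `flatOn n X` as an ideal of `SmoothAlg n`. -/
def flatIdeal (n : ℕ) (X : Set (Fin n → ℝ)) : Ideal (SmoothAlg n) where
  carrier := flatOn n X
  zero_mem' := by
    intro x _ j
    show iteratedFDeriv ℝ j (fun _ => (0:ℝ)) x = 0
    rw [iteratedFDeriv_zero_fun]; rfl
  add_mem' := by
    intro a b ha hb x hx j
    show iteratedFDeriv ℝ j ((a : (Fin n → ℝ) → ℝ) + (b : (Fin n → ℝ) → ℝ)) x = 0
    rw [iteratedFDeriv_add_apply ((smooth_mem a.2).of_le (coe_le_top' j)).contDiffAt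
      ((smooth_mem b.2).of_le (coe_le_top' j)).contDiffAt, ha x hx j, hb x hx j, add_zero]
  smul_mem' := by
    intro c a ha x hx j
    show iteratedFDeriv ℝ j (fun y => (c : (Fin n → ℝ) → ℝ) y * (a : (Fin n → ℝ) → ℝ) y) x = 0
    exact flatAt_mul (smooth_mem c.2) (smooth_mem a.2) (fun j => ha x hx j) j

lemma span_union_eq (n k : ℕ) (X : Set (Fin n → ℝ)) (f : Fin k → SmoothAlg n) :
    Ideal.span (Set.range f ∪ flatOn n X) = Ideal.span (Set.range f) ⊔ flatIdeal n X := by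
  rw [Ideal.span_union]
  congr 1
  exact Ideal.span_eq (flatIdeal n X)

/-- Every good ideal `I = (f_1,…,f_k, 𝔪_X^∞)` of `C^∞(ℝ^n)` (with
`X ⊆ ℝ^n` closed) is fair (germ-determined): `h ∈ I` iff for every `p ∈ ℝ^n` the germ of
`h` at `p` lies in the image of `I` in the ring of germs `C^∞_p(ℝ^n)`, i.e. iff for every
`p` there is `g ∈ I` with `h = g` near `p`. -/
theorem good_ideals_are_fair (n k : ℕ) (X : Set (Fin n → ℝ)) (hX : IsClosed X)
    (f : Fin k → SmoothAlg n) (I : Ideal (SmoothAlg n))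
    (hI : I = Ideal.span (Set.range f ∪ flatOn n X)) :
    ∀ h : SmoothAlg n, h ∈ I ↔
      ∀ p : Fin n → ℝ, ∃ g ∈ I,
        (h : (Fin n → ℝ) → ℝ) =ᶠ[nhds p] (g : (Fin n → ℝ) → ℝ) := by
  intro h
  constructor
  · intro hh p
    exact ⟨h, hh, Filter.EventuallyEq.rfl⟩
  · intro hloc
    classical
    subst hI
    -- Step 1: local decomposition of `h` near every point.
    have key : ∀ p : Fin n → ℝ, ∃ (U : Set (Fin n → ℝ)) (a : Fin k → SmoothAlg n)
        (mm : SmoothAlg n), IsOpen U ∧ p ∈ U ∧ mm ∈ flatOn n X ∧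
        ∀ x ∈ U, (h : (Fin n → ℝ) → ℝ) x
          = ∑ q, (a q : (Fin n → ℝ) → ℝ) x * (f q : (Fin n → ℝ) → ℝ) x
            + (mm : (Fin n → ℝ) → ℝ) x := by
      intro p
      obtain ⟨g, hgI, hev⟩ := hloc p
      rw [span_union_eq] at hgI
      obtain ⟨y, hy, z, hz, hyz⟩ := Submodule.mem_sup.mp hgI
      obtain ⟨c, hc⟩ := Ideal.mem_span_range_iff_exists_fun.mp hy
      obtain ⟨U, hU, hUo, hpU⟩ := eventually_nhds_iff.mp hev
      refine ⟨U, c, z, hUo, hpU, hz, fun x hx => ?_⟩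
      have hx1 : (h : (Fin n → ℝ) → ℝ) x = (g : (Fin n → ℝ) → ℝ) x := hU x hx
      rw [hx1, ← hyz, ← hc]
      simp [Finset.sum_apply]
    choose U a mm hUo hpU hmm heq using key
    -- Step 2: a smooth partition of unity subordinate to the covering `U`.
    obtain ⟨φ, hφ⟩ := SmoothPartitionOfUnity.exists_isSubordinate
      (I := 𝓘(ℝ, Fin n → ℝ)) isClosed_univ U hUo
      (fun x _ => Set.mem_iUnion.2 ⟨x, hpU x⟩)
    -- Step 3: glue the local coefficients.
    have hsmoothA : ∀ q : Fin k, ContDiff ℝ (⊤ : ℕ∞)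
        (fun x => ∑ᶠ p, φ p x • (a p q : (Fin n → ℝ) → ℝ) x) := by
      intro q
      exact (φ.contMDiff_finsum_smul
        (fun p x _ => (smooth_mem (a p q).2).contMDiff.contMDiffAt)).contDiff
    have hsmoothM : ContDiff ℝ (⊤ : ℕ∞)
        (fun x => ∑ᶠ p, φ p x • (mm p : (Fin n → ℝ) → ℝ) x) :=
      (φ.contMDiff_finsum_smul
        (fun p x _ => (smooth_mem (mm p).2).contMDiff.contMDiffAt)).contDiff
    set A : Fin k → SmoothAlg n := fun q => ⟨_, hsmoothA q⟩ with hA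
    set M0 : SmoothAlg n := ⟨_, hsmoothM⟩ with hM0
    -- pointwise identity
    have hpt : ∀ x : Fin n → ℝ, (h : (Fin n → ℝ) → ℝ) x
        = ∑ q, (A q : (Fin n → ℝ) → ℝ) x * (f q : (Fin n → ℝ) → ℝ) x
          + (M0 : (Fin n → ℝ) → ℝ) x := by
      intro x
      set T : Finset (Fin n → ℝ) := (φ.toPartitionOfUnity.locallyFinite.point_finite x).toFinset
        with hTdef
      have hT : ∀ v : (Fin n → ℝ) → ℝ, (∑ᶠ p, φ p x • v p) = ∑ p ∈ T, φ p x • v p := by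
        intro v
        refine finsum_eq_sum_of_support_subset _ fun p hp => ?_
        have : φ p x ≠ 0 := by
          intro h0
          apply hp
          simp [h0]
        simp only [hTdef, Finset.mem_coe, Set.Finite.mem_toFinset, Set.mem_setOf_eq,
          Function.mem_support, SmoothPartitionOfUnity.toPartitionOfUnity]
        exact this
      have hone : ∑ p ∈ T, φ p x = 1 := by
        rw [show (∑ p ∈ T, φ p x) = ∑ p ∈ T, φ p x • (1:ℝ) by simp, ← hT fun _ => (1:ℝ)]
        simpa using φ.sum_eq_one (Set.mem_univ x)
      have hmemU : ∀ p ∈ T, x ∈ U p := by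
        intro p hp
        have hsup : x ∈ support (φ p) := by
          simpa [hTdef, Set.Finite.mem_toFinset] using hp
        exact hφ p (subset_closure hsup)
      calc (h : (Fin n → ℝ) → ℝ) x
          = (∑ p ∈ T, φ p x) * (h : (Fin n → ℝ) → ℝ) x := by rw [hone, one_mul]
        _ = ∑ p ∈ T, φ p x * (h : (Fin n → ℝ) → ℝ) x := by rw [Finset.sum_mul]
        _ = ∑ p ∈ T, φ p x * (∑ q, (a p q : (Fin n → ℝ) → ℝ) x * (f q : (Fin n → ℝ) → ℝ) x
              + (mm p : (Fin n → ℝ) → ℝ) x) := by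
            refine Finset.sum_congr rfl fun p hp => ?_
            rw [heq p x (hmemU p hp)]
        _ = ∑ p ∈ T, ((∑ q, φ p x * ((a p q : (Fin n → ℝ) → ℝ) x * (f q : (Fin n → ℝ) → ℝ) x))
              + φ p x * (mm p : (Fin n → ℝ) → ℝ) x) := by
            simp [mul_add, Finset.mul_sum]
        _ = (∑ p ∈ T, ∑ q, φ p x * ((a p q : (Fin n → ℝ) → ℝ) x * (f q : (Fin n → ℝ) → ℝ) x))
              + ∑ p ∈ T, φ p x * (mm p : (Fin n → ℝ) → ℝ) x := Finset.sum_add_distrib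
        _ = (∑ q, ∑ p ∈ T, φ p x * ((a p q : (Fin n → ℝ) → ℝ) x * (f q : (Fin n → ℝ) → ℝ) x))
              + ∑ p ∈ T, φ p x * (mm p : (Fin n → ℝ) → ℝ) x := by rw [Finset.sum_comm]
        _ = ∑ q, (A q : (Fin n → ℝ) → ℝ) x * (f q : (Fin n → ℝ) → ℝ) x
              + (M0 : (Fin n → ℝ) → ℝ) x := by
            congr 1
            · refine Finset.sum_congr rfl fun q _ => ?_
              show _ = (∑ᶠ p, φ p x • (a p q : (Fin n → ℝ) → ℝ) x) * (f q : (Fin n → ℝ) → ℝ) x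
              rw [hT fun p => (a p q : (Fin n → ℝ) → ℝ) x, Finset.sum_mul]
              refine Finset.sum_congr rfl fun p _ => ?_
              rw [smul_eq_mul, mul_assoc]
            · show _ = ∑ᶠ p, φ p x • (mm p : (Fin n → ℝ) → ℝ) x
              rw [hT fun p => (mm p : (Fin n → ℝ) → ℝ) x]
              simp [smul_eq_mul]
    -- Step 4: `M0` is flat on `X`.
    have hMflat : M0 ∈ flatOn n X := by
      intro x hxX j
      obtain ⟨V, hV, hVfin⟩ := φ.locallyFinite x
      have hev : (M0 : (Fin n → ℝ) → ℝ)
          =ᶠ[𝓝 x] fun y => ∑ p ∈ hVfin.toFinset, φ p y * (mm p : (Fin n → ℝ) → ℝ) y := by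
        filter_upwards [hV] with y hy
        show (∑ᶠ p, φ p y • (mm p : (Fin n → ℝ) → ℝ) y) = _
        refine finsum_eq_sum_of_support_subset _ fun p hp => ?_
        have hyp : y ∈ support (φ p) := by
          intro h0
          apply hp
          simp [Function.mem_support, not_not] at h0 ⊢
          left
          exact h0
        simp only [Set.Finite.coe_toFinset]
        exact ⟨y, hyp, hy⟩
      rw [iteratedFDeriv_congr_nhds hev j]
      exact flatAt_sum _ _
        (fun p _ => ContDiff.mul (φ p).contMDiff.contDiff (smooth_mem (mm p).2))
        (fun p _ j => flatAt_mul (φ p).contMDiff.contDiff (smooth_mem (mm p).2)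
          (fun j => hmm p x hxX j) j) j
    -- Step 5: conclude.
    have hfinal : h = (∑ q, A q * f q) + M0 := by
      apply Subtype.ext
      funext x
      simpa [Finset.sum_apply] using hpt x
    rw [hfinal]
    refine Ideal.add_mem _ (Ideal.sum_mem _ fun q _ => Ideal.mul_mem_left _ _
      (Ideal.subset_span (Set.mem_union_left _ ⟨q, rfl⟩)))
      (Ideal.subset_span (Set.mem_union_right _ hMflat))
end
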